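/- Let n ≥ 1 and let V be a real vector space of dimension 2n. Let ω be a nonzero alternating n-linear form on V whose kernel K = {v ∈ V : ω(v, w₁, …, w_{n−1}) = 0 for all w₁, …, w_{n−1} ∈ V} has dimension n. Then there exist linear functionals φ₁, …, φₙ : V → ℝ, each vanishing on K, such that ω(v₁, …, vₙ) = det(φᵢ(vⱼ))_{i,j=1,…,n} for all v₁, …, vₙ ∈ V. -/

import Mathlib

/-- Let `V` be a real vector space of dimension `2n` (with `n = m + 1 ≥ 1`)
and `ω` a nonzero alternating `n`-linear form on `V` whose kernel
`K = {v : ∀ w₁ … w_{n-1}, ω (v, w₁, …, w_{n-1}) = 0}` has dimension `n`. Then there exist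
linear functionals `φ₁, …, φₙ : V → ℝ`, each vanishing on `K`, such that
`ω (v₁, …, vₙ) = det (φᵢ (vⱼ))` for all `v₁, …, vₙ ∈ V`. -/
theorem stmt3 (m : ℕ) (V : Type*) [AddCommGroup V] [Module ℝ V]
    [FiniteDimensional ℝ V] (hdim : Module.finrank ℝ V = 2 * (m + 1))
    (ω : V [⋀^Fin (m + 1)]→ₗ[ℝ] ℝ) (hω : ω ≠ 0)
    (K : Submodule ℝ V)
    (hK : ∀ v : V, v ∈ K ↔ ∀ w : Fin m → V, ω (Fin.cons v w) = 0)
    (hKdim : Module.finrank ℝ K = m + 1) :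
    ∃ φ : Fin (m + 1) → (V →ₗ[ℝ] ℝ),
      (∀ i, ∀ v ∈ K, φ i v = 0) ∧
      ∀ v : Fin (m + 1) → V, ω v = Matrix.det (Matrix.of fun i j => φ i (v j)) := by
  classical
  -- ω vanishes whenever some slot lies in K
  have hzero : ∀ (u : Fin (m + 1) → V) (i : Fin (m + 1)), u i ∈ K → ω u = 0 := by
    intro u i hi
    have h0 : ω (u ∘ Equiv.swap i 0) = 0 := by
      have h : (u ∘ Equiv.swap i 0) =
          Fin.cons ((u ∘ Equiv.swap i 0) 0) (Fin.tail (u ∘ Equiv.swap i 0)) :=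
        (Fin.cons_self_tail _).symm
      rw [h]
      have h00 : (u ∘ Equiv.swap i 0) 0 = u i := by simp [Equiv.swap_apply_right]
      rw [h00]
      exact (hK (u i)).1 hi _
    have hperm := ω.map_perm u (Equiv.swap i 0)
    rw [h0] at hperm
    rcases Int.units_eq_one_or (Equiv.Perm.sign (Equiv.swap i 0)) with h | h <;>
      rw [h] at hperm <;> simpa using hperm.symm
  -- choose a complement W of K
  obtain ⟨W, hWc⟩ := Submodule.exists_isCompl K
  have hWdim : Module.finrank ℝ W = m + 1 := by
    have := Submodule.finrank_add_eq_of_isCompl hWc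
    omega
  set p : V →ₗ[ℝ] W := W.projectionOnto K hWc.symm with hp
  have hpk : ∀ v ∈ K, p v = 0 := fun v hv =>
    Submodule.projectionOnto_apply_of_mem_right hWc.symm hv
  have hsub : ∀ v : V, v - (p v : V) ∈ K := by
    intro v
    obtain ⟨k, w, hk, hw, rfl⟩ := Submodule.codisjoint_iff_exists_add_eq.mp hWc.codisjoint v
    have hpv : p (k + w) = ⟨w, hw⟩ := by
      rw [map_add, Submodule.projectionOnto_apply_of_mem_right hWc.symm hk,
        Submodule.projectionOnto_apply_left hWc.symm ⟨w, hw⟩]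
      simp
    rw [hpv]
    simpa using hk
  -- ω only depends on the projection
  have hproj : ∀ v : Fin (m + 1) → V, ω v = ω (fun i => (p (v i) : V)) := by
    intro v
    have hdecomp : (fun i => (p (v i) : V)) + (fun i => v i - (p (v i) : V)) = v := by
      funext i; simp
    have hadd := ω.toMultilinearMap.map_add_univ (fun i => (p (v i) : V))
      (fun i => v i - (p (v i) : V))
    simp only [AlternatingMap.coe_multilinearMap] at hadd
    rw [hdecomp] at hadd
    rw [hadd, Finset.sum_eq_single Finset.univ]
    · simp
    · intro s _ hs
      obtain ⟨i, hi⟩ : ∃ i, i ∉ s := by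
        by_contra h
        push_neg at h
        exact hs (Finset.eq_univ_iff_forall.2 h)
      apply hzero _ i
      rw [Finset.piecewise_eq_of_notMem _ _ _ hi]
      exact hsub (v i)
    · simp
  -- the restriction of ω to W
  set ωW : W [⋀^Fin (m + 1)]→ₗ[ℝ] ℝ := ω.compLinearMap W.subtype with hωW
  have hrestr : ∀ v : Fin (m + 1) → V, ω v = ωW (fun i => p (v i)) := by
    intro v; rw [hproj v]; rfl
  -- a basis of W
  set e : Module.Basis (Fin (m + 1)) ℝ W := Module.finBasisOfFinrankEq ℝ W hWdim with he
  have hdet := ωW.eq_smul_basis_det e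
  set c : ℝ := ωW e with hc
  have hcne : c ≠ 0 := by
    intro h0
    apply hω
    ext v
    rw [hrestr v, hdet]
    simp [← hc, h0]
  -- rescale the basis so that its determinant form is exactly ωW
  set w : Fin (m + 1) → ℝˣ := fun i => if i = 0 then (Units.mk0 c hcne)⁻¹ else 1 with hw
  set e' : Module.Basis (Fin (m + 1)) ℝ W := e.unitsSMul w with he'
  have hprodw : (∏ i, w i) = (Units.mk0 c hcne)⁻¹ := by
    rw [hw, Finset.prod_ite_eq' Finset.univ (0 : Fin (m + 1)) (fun _ => (Units.mk0 c hcne)⁻¹)]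
    simp
  have hdet' : e'.det = c • e.det := by
    rw [he', Module.Basis.det_unitsSMul, hprodw]
    norm_num
  refine ⟨fun i => (e'.coord i).comp (p : V →ₗ[ℝ] W), ?_, ?_⟩
  · intro i v hv
    simp [hpk v hv]
  · intro v
    rw [hrestr v, hdet]
    have : (c • e.det) (fun i => p (v i)) = e'.det (fun i => p (v i)) := by rw [hdet']
    rw [this, Module.Basis.det_apply]
    have hmat : e'.toMatrix (fun i => p (v i)) =
        Matrix.of fun i j => (e'.coord i) (p (v j)) := by
      ext i j
      simp [Module.Basis.toMatrix_apply, Module.Basis.coord_apply]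
    rw [hmat]
    rfl
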